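/- Let m, n be positive integers, A ∈ ℝ^{m×n}, v ∈ ℝ^n, δ > 0, ρ₀ ∈ [0,1], ρ₊, ρ₋ ∈ (ℝ_{≥0})^m, and Λ ∈ [0, 2√n]. Suppose x ∈ [−1,1]^n satisfies τ := δ·‖Ax‖_∞ ≥ 10√n and −ρ₀·⟨v,x⟩/√n + ρ₊ᵀ A x − ρ₋ᵀ A x ≤ √n − τ. Then the vector y := (10√n/τ)·x satisfies: y ∈ [−1,1]^n, ‖Ay‖_∞ = 10√n/δ, and −ρ₀·⟨v,y⟩/√n + ρ₊ᵀ A y − ρ₋ᵀ A y ≤ −ρ₀·Λ. -/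

import Mathlib

/-- Rescaling step of the width-reduction argument: if `x ∈ [-1,1]^n` has
`τ := δ‖Ax‖_∞ ≥ 10√n` and satisfies `-ρ₀⟨v,x⟩/√n + ρ₊ᵀAx - ρ₋ᵀAx ≤ √n - τ`, then
`y := (10√n/τ)·x` lies in `[-1,1]^n`, has `‖Ay‖_∞ = 10√n/δ`, and satisfies
`-ρ₀⟨v,y⟩/√n + ρ₊ᵀAy - ρ₋ᵀAy ≤ -ρ₀Λ`. -/
theorem width_reduction_rescale (m n : ℕ) (hm : 0 < m) (hn : 0 < n)
    (A : Matrix (Fin m) (Fin n) ℝ) (v : Fin n → ℝ) (δ : ℝ) (hδ : 0 < δ)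
    (ρ₀ : ℝ) (hρ₀ : 0 ≤ ρ₀) (hρ₀1 : ρ₀ ≤ 1)
    (ρp ρm : Fin m → ℝ) (hρp : ∀ i, 0 ≤ ρp i) (hρm : ∀ i, 0 ≤ ρm i)
    (Λ : ℝ) (hΛ0 : 0 ≤ Λ) (hΛ : Λ ≤ 2 * Real.sqrt n)
    (x : Fin n → ℝ) (hx : ∀ j, |x j| ≤ 1)
    (τ : ℝ) (hτdef : τ = δ * (⨆ i, |A.mulVec x i|))
    (hτ : 10 * Real.sqrt n ≤ τ)
    (hineq : -ρ₀ * (∑ j, v j * x j) / Real.sqrt n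
        + (∑ i, ρp i * A.mulVec x i) - (∑ i, ρm i * A.mulVec x i) ≤ Real.sqrt n - τ)
    (y : Fin n → ℝ) (hy : y = fun j => (10 * Real.sqrt n / τ) * x j) :
    (∀ j, |y j| ≤ 1) ∧
    (⨆ i, |A.mulVec y i|) = 10 * Real.sqrt n / δ ∧
    -ρ₀ * (∑ j, v j * y j) / Real.sqrt n
        + (∑ i, ρp i * A.mulVec y i) - (∑ i, ρm i * A.mulVec y i) ≤ -ρ₀ * Λ := by
  set s := Real.sqrt n with hs
  have hs1 : 1 ≤ s := by
    rw [hs]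
    rw [show (1:ℝ) = Real.sqrt 1 by simp]
    exact Real.sqrt_le_sqrt (by exact_mod_cast hn)
  have hs0 : 0 < s := lt_of_lt_of_le one_pos hs1
  have hτ0 : 0 < τ := lt_of_lt_of_le (by nlinarith) hτ
  set c := 10 * s / τ with hc
  have hc0 : 0 < c := div_pos (by nlinarith) hτ0
  have hc1 : c ≤ 1 := (div_le_one hτ0).mpr hτ
  have hcτ : c * τ = 10 * s := by rw [hc]; field_simp [hτ0.ne']
  have hAy : ∀ i, A.mulVec y i = c * A.mulVec x i := by
    intro i
    rw [hy, show (fun j => c * x j) = c • x from rfl, Matrix.mulVec_smul]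
    simp
  have hvy : (∑ j, v j * y j) = c * ∑ j, v j * x j := by
    simp only [hy, Finset.mul_sum]
    exact Finset.sum_congr rfl fun j _ => by ring
  refine ⟨?_, ?_, ?_⟩
  · intro j
    rw [hy]
    simp only [abs_mul]
    calc |c| * |x j| ≤ 1 * 1 := by
          apply mul_le_mul (by rw [abs_of_pos hc0]; exact hc1) (hx j) (abs_nonneg _) zero_le_one
      _ = 1 := by ring
  · have hsup : (⨆ i, |A.mulVec x i|) = τ / δ := by
      rw [hτdef]; field_simp
    have : (⨆ i, |A.mulVec y i|) = ⨆ i, c * |A.mulVec x i| := by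
      congr 1; funext i; rw [hAy i, abs_mul, abs_of_pos hc0]
    rw [this, ← Real.mul_iSup_of_nonneg hc0.le, hsup]
    rw [hc]; field_simp
  · have hL : -ρ₀ * (∑ j, v j * y j) / s
        + (∑ i, ρp i * A.mulVec y i) - (∑ i, ρm i * A.mulVec y i)
        = c * (-ρ₀ * (∑ j, v j * x j) / s
        + (∑ i, ρp i * A.mulVec x i) - (∑ i, ρm i * A.mulVec x i)) := by
      have hp : ∑ i, ρp i * A.mulVec y i = c * ∑ i, ρp i * A.mulVec x i := by
        rw [Finset.mul_sum]; exact Finset.sum_congr rfl fun i _ => by rw [hAy i]; ring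
      have hq : ∑ i, ρm i * A.mulVec y i = c * ∑ i, ρm i * A.mulVec x i := by
        rw [Finset.mul_sum]; exact Finset.sum_congr rfl fun i _ => by rw [hAy i]; ring
      rw [hvy, hp, hq]; ring
    rw [hL]
    have h1 : c * (-ρ₀ * (∑ j, v j * x j) / s
        + (∑ i, ρp i * A.mulVec x i) - (∑ i, ρm i * A.mulVec x i)) ≤ c * (s - τ) :=
      mul_le_mul_of_nonneg_left hineq hc0.le
    have h2 : c * (s - τ) = c * s - 10 * s := by rw [mul_sub, hcτ]
    have h3 : c * s ≤ s := by nlinarith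
    have h4 : ρ₀ * Λ ≤ 2 * s := by nlinarith
    nlinarith
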